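/- Let q = 1/p for a prime p, let f : ℝ → ℂ be a continuous function and b a real number. Then the Jackson integral (1 - p⁻¹) · b · ∑_{k=0}^∞ p^{-k} f(p^{-k} b) equals b times the integral over the p-adic integers ℤ_p of the function y ↦ f(b · |y|_p) with respect to the normalized Haar measure on ℤ_p, provided the series converges absolutely. -/

import Mathlib

open MeasureTheory

section aux

variable (p : ℕ) [Fact p.Prime]

/-- The closed ball of radius `p^{-k}` in `ℤ_[p]`. -/
private def Bset (k : ℕ) : Set ℤ_[p] := {y | ‖y‖ ≤ (p : ℝ) ^ (-(k : ℤ))}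

private lemma Bset_closed (k : ℕ) : IsClosed (Bset p k) :=
  isClosed_le continuous_norm continuous_const

private lemma Bset_meas [MeasurableSpace ℤ_[p]] [BorelSpace ℤ_[p]] (k : ℕ) :
    MeasurableSet (Bset p k) := (Bset_closed p k).measurableSet

private lemma Bset_antitone {k l : ℕ} (h : k ≤ l) : Bset p l ⊆ Bset p k := by
  intro y hy
  have h1 : (1:ℝ) ≤ (p:ℝ) := by exact_mod_cast (Fact.out : p.Prime).one_lt.le
  exact le_trans hy (zpow_le_zpow_right₀ h1 (by omega))

private lemma measure_Bset [MeasurableSpace ℤ_[p]] [BorelSpace ℤ_[p]]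
    (μ : Measure ℤ_[p]) [μ.IsAddHaarMeasure] [IsProbabilityMeasure μ] (k : ℕ) :
    μ (Bset p k) = ((p : ENNReal) ^ k)⁻¹ := by
  -- translates of `Bset p k` by the residues `0, ..., p^k - 1` cover `ℤ_[p]` disjointly
  have hmem : ∀ (r : ℕ) (y : ℤ_[p]),
      y ∈ ((r : ℤ_[p]) + ·) ⁻¹' Bset p k ↔ ‖((r : ℤ_[p]) + y)‖ ≤ (p : ℝ) ^ (-(k : ℤ)) := by
    intro r y; rfl
  have hcover : (Set.univ : Set ℤ_[p])
      = ⋃ r ∈ Finset.range (p ^ k), ((-(r : ℤ_[p])) + ·) ⁻¹' Bset p k := by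
    ext y
    simp only [Set.mem_univ, Set.mem_iUnion, true_iff, Set.mem_preimage, Finset.mem_range]
    refine ⟨y.appr k, y.appr_lt k, ?_⟩
    have := (PadicInt.norm_le_pow_iff_mem_span_pow (y - (y.appr k : ℤ_[p])) k).2
      (PadicInt.appr_spec k y)
    simpa [Bset, neg_add_eq_sub, sub_eq_add_neg, add_comm] using this
  have hdisj : (Finset.range (p ^ k) : Set ℕ).PairwiseDisjoint
      (fun r : ℕ => ((-(r : ℤ_[p])) + ·) ⁻¹' Bset p k) := by
    intro r hr s hs hrs
    refine Set.disjoint_left.2 fun y hy1 hy2 => hrs ?_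
    simp only [Set.mem_preimage, Bset, Set.mem_setOf_eq] at hy1 hy2
    have h1 : ‖(-(r : ℤ_[p]) + y) - (-(s : ℤ_[p]) + y)‖ ≤ (p : ℝ) ^ (-(k : ℤ)) := by
      have h0 := PadicInt.nonarchimedean (-(r : ℤ_[p]) + y) (-(-(s : ℤ_[p]) + y))
      rw [norm_neg] at h0
      rw [sub_eq_add_neg]
      exact le_trans h0 (max_le hy1 hy2)
    have h2 : ‖(((s : ℤ) - (r : ℤ) : ℤ) : ℤ_[p])‖ ≤ (p : ℝ) ^ (-(k : ℤ)) := by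
      have : ((((s : ℤ) - (r : ℤ) : ℤ) : ℤ_[p])) = (-(r : ℤ_[p]) + y) - (-(s : ℤ_[p]) + y) := by
        push_cast; ring
      rw [this]; exact h1
    have hdvd : ((p : ℤ) ^ k) ∣ ((s : ℤ) - (r : ℤ)) := by
      have := PadicInt.norm_int_le_pow_iff_dvd (p := p) (k := (s : ℤ) - (r : ℤ)) (n := k)
      exact_mod_cast this.1 h2
    have habs : |(s : ℤ) - (r : ℤ)| < (p : ℤ) ^ k := by
      simp only [Finset.coe_range, Set.mem_Iio] at hr hs
      rw [abs_lt]; constructor <;> [nlinarith [hr, hs]; nlinarith [hr, hs]]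
    have := Int.eq_zero_of_abs_lt_dvd hdvd habs
    omega
  have hmeas : ∀ r : ℕ, MeasurableSet (((-(r : ℤ_[p])) + ·) ⁻¹' Bset p k) := fun r =>
    (Bset_meas p k).preimage (measurable_const_add _)
  have hsum : μ (Set.univ : Set ℤ_[p])
      = ∑ r ∈ Finset.range (p ^ k), μ (((-(r : ℤ_[p])) + ·) ⁻¹' Bset p k) := by
    rw [hcover]
    exact measure_biUnion_finset hdisj fun r _ => hmeas r
  have htrans : ∀ r : ℕ, μ (((-(r : ℤ_[p])) + ·) ⁻¹' Bset p k) = μ (Bset p k) := fun r =>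
    measure_preimage_add μ _ _
  simp only [htrans, Finset.sum_const, Finset.card_range, nsmul_eq_mul, measure_univ] at hsum
  have h1 : μ (Bset p k) * ((p : ENNReal) ^ k) = 1 := by
    rw [mul_comm]
    push_cast at hsum
    exact hsum.symm
  exact ENNReal.eq_inv_of_mul_eq_one_left h1

private def Sset (k : ℕ) : Set ℤ_[p] := {y | ‖y‖ = (p : ℝ) ^ (-(k : ℤ))}

private lemma hp_one_lt : (1 : ℝ) < (p : ℝ) := by
  exact_mod_cast (Fact.out : p.Prime).one_lt

private lemma Sset_eq (k : ℕ) : Sset p k = Bset p k \ Bset p (k + 1) := by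
  ext y
  simp only [Sset, Bset, Set.mem_setOf_eq, Set.mem_diff]
  constructor
  · intro h
    refine ⟨le_of_eq h, ?_⟩
    rw [h, not_le]
    refine zpow_lt_zpow_right₀ (hp_one_lt p) ?_
    omega
  · rintro ⟨h1, h2⟩
    by_contra hne
    have hlt : ‖y‖ < (p : ℝ) ^ (-(k : ℤ)) := lt_of_le_of_ne h1 hne
    have := (PadicInt.norm_lt_pow_iff_norm_le_pow_sub_one y (-(k : ℤ))).1 hlt
    apply h2
    have heq : (-(k : ℤ)) - 1 = -((k : ℤ) + 1) := by ring
    rw [heq] at this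
    exact_mod_cast this

private lemma measure_Sset [MeasurableSpace ℤ_[p]] [BorelSpace ℤ_[p]]
    (μ : Measure ℤ_[p]) [μ.IsAddHaarMeasure] [IsProbabilityMeasure μ] (k : ℕ) :
    μ (Sset p k) = ((p : ENNReal) ^ k)⁻¹ - ((p : ENNReal) ^ (k + 1))⁻¹ := by
  rw [Sset_eq, measure_diff (Bset_antitone p (by omega))
    ((Bset_meas p (k + 1)).nullMeasurableSet)
    (ne_top_of_le_ne_top (measure_ne_top μ _) (measure_mono (Set.subset_univ _))),
    measure_Bset, measure_Bset]

private lemma measure_Sset_toReal [MeasurableSpace ℤ_[p]] [BorelSpace ℤ_[p]]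
    (μ : Measure ℤ_[p]) [μ.IsAddHaarMeasure] [IsProbabilityMeasure μ] (k : ℕ) :
    (μ (Sset p k)).toReal = (p : ℝ) ^ (-(k : ℤ)) * (1 - (p : ℝ)⁻¹) := by
  have hple : ((p : ENNReal) ^ (k + 1))⁻¹ ≤ ((p : ENNReal) ^ k)⁻¹ := by
    apply ENNReal.inv_le_inv.2
    exact pow_le_pow_right₀ (by exact_mod_cast (Fact.out : p.Prime).one_lt.le) (by omega)
  have hfin : ((p : ENNReal) ^ k)⁻¹ ≠ ⊤ := by
    rw [ENNReal.inv_ne_top]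
    exact pow_ne_zero k (by exact_mod_cast (Fact.out : p.Prime).pos.ne')
  rw [measure_Sset, ENNReal.toReal_sub_of_le hple hfin]
  have hpr : (0 : ℝ) < (p : ℝ) := lt_trans one_pos (hp_one_lt p)
  have h1 : ∀ n : ℕ, (((p : ENNReal) ^ n)⁻¹).toReal = ((p : ℝ) ^ n)⁻¹ := by
    intro n
    simp [ENNReal.toReal_inv, ENNReal.toReal_pow]
  rw [h1, h1]
  rw [zpow_neg, zpow_natCast]
  field_simp
  ring

private lemma measure_singleton_zero [MeasurableSpace ℤ_[p]] [BorelSpace ℤ_[p]]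
    (μ : Measure ℤ_[p]) [μ.IsAddHaarMeasure] [IsProbabilityMeasure μ] :
    μ ({0} : Set ℤ_[p]) = 0 := by
  have hle : ∀ k : ℕ, μ ({0} : Set ℤ_[p]) ≤ ((p : ENNReal)⁻¹) ^ k := by
    intro k
    have hsub : ({0} : Set ℤ_[p]) ⊆ Bset p k := by
      intro y hy
      simp only [Set.mem_singleton_iff] at hy
      subst hy
      simp only [Bset, Set.mem_setOf_eq, norm_zero]
      positivity
    calc μ ({0} : Set ℤ_[p]) ≤ μ (Bset p k) := measure_mono hsub
      _ = ((p : ENNReal) ^ k)⁻¹ := measure_Bset p μ k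
      _ = ((p : ENNReal)⁻¹) ^ k := by rw [ENNReal.inv_pow]
  have htend : Filter.Tendsto (fun k : ℕ => ((p : ENNReal)⁻¹) ^ k) Filter.atTop (nhds 0) := by
    apply ENNReal.tendsto_pow_atTop_nhds_zero_of_lt_one
    rw [ENNReal.inv_lt_one]
    exact_mod_cast (Fact.out : p.Prime).one_lt
  have := ge_of_tendsto' htend hle
  exact le_antisymm this zero_le

end aux

theorem stmt_0 (p : ℕ) [Fact p.Prime] (f : ℝ → ℂ) (hf : Continuous f) (b : ℝ)
    [MeasurableSpace ℤ_[p]] [BorelSpace ℤ_[p]]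
    (μ : Measure ℤ_[p]) [μ.IsAddHaarMeasure] [IsProbabilityMeasure μ]
    (hsum : Summable fun k : ℕ => (p : ℝ) ^ (-(k : ℤ)) * ‖f ((p : ℝ) ^ (-(k : ℤ)) * b)‖) :
    (1 - (p : ℂ)⁻¹) * (b : ℂ) * ∑' k : ℕ, (p : ℂ) ^ (-(k : ℤ)) * f ((p : ℝ) ^ (-(k : ℤ)) * b)
      = (b : ℂ) * ∫ y : ℤ_[p], f (b * ‖y‖) ∂μ := by
  have hpr1 : (1 : ℝ) < (p : ℝ) := hp_one_lt p
  set g : ℤ_[p] → ℂ := fun y => f (b * ‖y‖) with hg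
  have hgc : Continuous g := hf.comp (continuous_const.mul continuous_norm)
  have hgi : Integrable g μ :=
    hgc.integrable_of_hasCompactSupport (HasCompactSupport.of_compactSpace g)
  have hSm : ∀ k : ℕ, MeasurableSet (Sset p k) := fun k => by
    rw [Sset_eq]; exact (Bset_meas p k).diff (Bset_meas p (k + 1))
  have hSd : Pairwise (Function.onFun Disjoint (Sset p)) := by
    intro k l hkl
    rw [Function.onFun, Set.disjoint_left]
    intro y hy1 hy2
    simp only [Sset, Set.mem_setOf_eq] at hy1 hy2
    apply hkl
    have heq : (p : ℝ) ^ (-(k : ℤ)) = (p : ℝ) ^ (-(l : ℤ)) := hy1.symm.trans hy2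
    have := zpow_right_injective₀ (by linarith : (0:ℝ) < (p:ℝ)) (by linarith : (p:ℝ) ≠ 1) heq
    omega
  have hae : (Set.univ : Set ℤ_[p]) =ᵐ[μ] ⋃ k : ℕ, Sset p k := by
    symm
    rw [MeasureTheory.ae_eq_univ]
    refine measure_mono_null ?_ (measure_singleton_zero p μ)
    intro y hy
    simp only [Set.mem_compl_iff, Set.mem_iUnion, not_exists] at hy
    simp only [Set.mem_singleton_iff]
    by_contra h0
    refine hy y.valuation ?_
    simp only [Sset, Set.mem_setOf_eq]
    rw [PadicInt.norm_eq_zpow_neg_valuation h0]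
  have hcov : ∫ y, g y ∂μ = ∑' k : ℕ, ∫ y in Sset p k, g y ∂μ := by
    rw [← setIntegral_univ, setIntegral_congr_set hae]
    exact integral_iUnion hSm hSd hgi.integrableOn
  have hterm : ∀ k : ℕ, ∫ y in Sset p k, g y ∂μ
      = ((p : ℝ) ^ (-(k : ℤ)) * (1 - (p : ℝ)⁻¹)) • f (b * (p : ℝ) ^ (-(k : ℤ))) := by
    intro k
    have : ∫ y in Sset p k, g y ∂μ = ∫ _ in Sset p k, f (b * (p : ℝ) ^ (-(k : ℤ))) ∂μ := by
      apply setIntegral_congr_fun (hSm k)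
      intro y hy
      simp only [Sset, Set.mem_setOf_eq] at hy
      simp only [hg, hy]
    rw [this, setIntegral_const, measureReal_def, measure_Sset_toReal]
  rw [hcov]
  simp only [hterm]
  rw [mul_comm (1 - (p : ℂ)⁻¹) (b : ℂ), mul_assoc, ← tsum_mul_left]
  congr 1
  apply tsum_congr
  intro k
  rw [Complex.real_smul, mul_comm b ((p : ℝ) ^ (-(k : ℤ)))]
  push_cast
  ring
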